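/- Let X ≠ {0} be a real normed space, C ⊆ X a nonempty convex set whose interior U := int(C) is nonempty, and b : X → ℝ a function that is continuous on C and twice continuously Fréchet differentiable on U: there exist maps b' : U → X* and b'' : U → (continuous bilinear forms on X) with b' the Fréchet derivative of b at each z ∈ U, b''(z) the Fréchet derivative of b' at each z ∈ U, and z ↦ b''(z) continuous on U. Let S ⊆ U be nonempty and convex and suppose η > 0 satisfies b''(z)(w,w) ≥ η‖w‖² for every z ∈ S and every w ∈ X. Then b is strongly convex on S with parameter η, and moreover b is strongly convex with the same parameter η on cl(S) ∩ C: for all x, y ∈ cl(S) ∩ C and λ ∈ (0,1), b(λx + (1−λ)y) + (1/2)η λ(1−λ)‖x − y‖² ≤ λ b(x) + (1−λ) b(y). -/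

import Mathlib

open Filter Topology

theorem key_strong_convexity
    {X : Type*} [NormedAddCommGroup X] [NormedSpace ℝ X]
    (C : Set X)
    (b : X → ℝ)
    (b' : X → X →L[ℝ] ℝ) (b'' : X → X →L[ℝ] X →L[ℝ] ℝ)
    (hb' : ∀ z ∈ interior C, HasFDerivAt b (b' z) z)
    (hb'' : ∀ z ∈ interior C, HasFDerivAt b' (b'' z) z)
    (S : Set X) (hSU : S ⊆ interior C) (hSconv : Convex ℝ S)
    (η : ℝ)
    (hpos : ∀ z ∈ S, ∀ w : X, η * ‖w‖ ^ 2 ≤ b'' z w w) :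
    ∀ x ∈ S, ∀ y ∈ S, ∀ l ∈ Set.Ioo (0:ℝ) 1,
      b (l • x + (1 - l) • y) + (1 / 2) * η * l * (1 - l) * ‖x - y‖ ^ 2
        ≤ l * b x + (1 - l) * b y := by
  intro x hx y hy l hl
  set v : X := x - y with hv
  set c : ℝ := η * ‖v‖ ^ 2 with hc
  set φ : ℝ → X := fun t => y + t • v with hφ
  have hφcomb : ∀ t : ℝ, φ t = t • x + (1 - t) • y := by
    intro t
    simp only [hφ, hv]
    module
  have hφS : ∀ t ∈ Set.Icc (0:ℝ) 1, φ t ∈ S := by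
    intro t ht
    rw [hφcomb]
    exact hSconv hx hy ht.1 (by linarith [ht.2]) (by ring)
  have hφd : ∀ t : ℝ, HasDerivAt φ v t := by
    intro t
    simpa [hφ] using ((hasDerivAt_id t).smul_const v).const_add y
  -- set up 1D function
  set h : ℝ → ℝ := fun t => b (φ t) - c / 2 * t ^ 2 with hh
  set D1 : ℝ → ℝ := fun t => b' (φ t) v - c * t with hD1
  have hHd : ∀ t, φ t ∈ interior C → HasDerivAt h (D1 t) t := by
    intro t ht
    have h1 : HasDerivAt (fun t => b (φ t)) (b' (φ t) v) t :=
      (hb' _ ht).comp_hasDerivAt t (hφd t)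
    have h2 : HasDerivAt (fun t : ℝ => c / 2 * t ^ 2) (c * t) t := by
      have := (hasDerivAt_pow 2 t).const_mul (c / 2)
      exact this.congr_deriv (by rw [Nat.cast_ofNat, show 2 - 1 = 1 from rfl, pow_one]; ring)
    exact h1.sub h2
  have hHd2 : ∀ t, φ t ∈ S → HasDerivAt D1 (b'' (φ t) v v - c) t := by
    intro t ht
    have h1 : HasDerivAt (fun t => b' (φ t)) (b'' (φ t) v) t :=
      (hb'' _ (hSU ht)).comp_hasDerivAt t (hφd t)
    have h2 : HasDerivAt (fun t => b' (φ t) v) (b'' (φ t) v v) t := by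
      simpa using h1.clm_apply (hasDerivAt_const t v)
    exact (h2.sub ((hasDerivAt_id t).const_mul c)).congr_deriv (by ring)
  have hconv : ConvexOn ℝ (Set.Icc (0:ℝ) 1) h := by
    apply convexOn_of_hasDerivWithinAt2_nonneg (f' := D1)
      (f'' := fun t => b'' (φ t) v v - c) (convex_Icc 0 1)
    · intro t ht
      exact (hHd t (hSU (hφS t ht))).continuousAt.continuousWithinAt
    · intro t ht
      rw [interior_Icc] at ht
      exact (hHd t (hSU (hφS t (Set.Ioo_subset_Icc_self ht)))).hasDerivWithinAt
    · intro t ht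
      rw [interior_Icc] at ht
      exact (hHd2 t (hφS t (Set.Ioo_subset_Icc_self ht))).hasDerivWithinAt
    · intro t ht
      rw [interior_Icc] at ht
      have := hpos _ (hφS t (Set.Ioo_subset_Icc_self ht)) v
      simp only [sub_nonneg]
      linarith
  have := hconv.2 (Set.right_mem_Icc.2 zero_le_one) (Set.left_mem_Icc.2 zero_le_one)
    (le_of_lt hl.1) (show (0:ℝ) ≤ 1 - l by linarith [hl.2]) (show l + (1 - l) = 1 by ring)
  have hφ1 : φ 1 = x := by simp [hφ, hv]
  have hφ0 : φ 0 = y := by simp [hφ]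
  have hsm : l • (1:ℝ) + (1 - l) • (0:ℝ) = l := by simp
  rw [hsm] at this
  simp only [hh, hφ1, hφ0, smul_eq_mul] at this
  have hcomb : φ l = l • x + (1 - l) • y := hφcomb l
  rw [← hcomb]
  rw [hc] at this
  ring_nf at this ⊢
  linarith [this]

/-- Let `X ≠ {0}` be a real normed space, `C` a nonempty convex set
with nonempty interior `U`, and `b : X → ℝ` continuous on `C` and twice continuously
Fréchet differentiable on `U`. If `S ⊆ U` is nonempty and convex and `η > 0` satisfies
`b''(z)(w,w) ≥ η‖w‖²` for every `z ∈ S` and `w ∈ X`, then `b` is strongly convex on `S`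
with parameter `η`, and moreover strongly convex with the same parameter on
`cl(S) ∩ C`. -/
theorem strong_convexity_from_positive_definite_hessian
    {X : Type*} [NormedAddCommGroup X] [NormedSpace ℝ X] [Nontrivial X]
    (C : Set X) (hC : C.Nonempty) (hCconv : Convex ℝ C)
    (hU : (interior C).Nonempty)
    (b : X → ℝ) (hbcont : ContinuousOn b C)
    (b' : X → X →L[ℝ] ℝ) (b'' : X → X →L[ℝ] X →L[ℝ] ℝ)
    (hb' : ∀ z ∈ interior C, HasFDerivAt b (b' z) z)
    (hb'' : ∀ z ∈ interior C, HasFDerivAt b' (b'' z) z)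
    (hb''cont : ContinuousOn b'' (interior C))
    (S : Set X) (hSne : S.Nonempty) (hSU : S ⊆ interior C) (hSconv : Convex ℝ S)
    (η : ℝ) (hη : 0 < η)
    (hpos : ∀ z ∈ S, ∀ w : X, η * ‖w‖ ^ 2 ≤ b'' z w w) :
    (∀ x ∈ S, ∀ y ∈ S, ∀ l ∈ Set.Ioo (0:ℝ) 1,
      b (l • x + (1 - l) • y) + (1 / 2) * η * l * (1 - l) * ‖x - y‖ ^ 2
        ≤ l * b x + (1 - l) * b y) ∧
    (∀ x ∈ closure S ∩ C, ∀ y ∈ closure S ∩ C, ∀ l ∈ Set.Ioo (0:ℝ) 1,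
      b (l • x + (1 - l) • y) + (1 / 2) * η * l * (1 - l) * ‖x - y‖ ^ 2
        ≤ l * b x + (1 - l) * b y) := by
  have key := key_strong_convexity C b b' b'' hb' hb'' S hSU hSconv η hpos
  refine ⟨key, ?_⟩
  rintro x ⟨hxS, hxC⟩ y ⟨hyS, hyC⟩ l hl
  obtain ⟨u, hu, hulim⟩ := mem_closure_iff_seq_limit.1 hxS
  obtain ⟨w, hw, hwlim⟩ := mem_closure_iff_seq_limit.1 hyS
  have hSC : S ⊆ C := fun z hz => interior_subset (hSU hz)
  -- limits of function values
  have hbu : Tendsto (fun n => b (u n)) atTop (𝓝 (b x)) :=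
    (hbcont x hxC).tendsto.comp (tendsto_nhdsWithin_of_tendsto_nhds_of_eventually_within _
      hulim (Eventually.of_forall fun n => hSC (hu n)))
  have hbw : Tendsto (fun n => b (w n)) atTop (𝓝 (b y)) :=
    (hbcont y hyC).tendsto.comp (tendsto_nhdsWithin_of_tendsto_nhds_of_eventually_within _
      hwlim (Eventually.of_forall fun n => hSC (hw n)))
  have hcombmem : l • x + (1 - l) • y ∈ C :=
    hCconv hxC hyC (le_of_lt hl.1) (by linarith [hl.2]) (by ring)
  have hcomblim : Tendsto (fun n => l • u n + (1 - l) • w n) atTop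
      (𝓝 (l • x + (1 - l) • y)) :=
    (hulim.const_smul l).add (hwlim.const_smul (1 - l))
  have hbcomb : Tendsto (fun n => b (l • u n + (1 - l) • w n)) atTop
      (𝓝 (b (l • x + (1 - l) • y))) :=
    (hbcont _ hcombmem).tendsto.comp (tendsto_nhdsWithin_of_tendsto_nhds_of_eventually_within _
      hcomblim (Eventually.of_forall fun n =>
        hSC (hSconv (hu n) (hw n) (le_of_lt hl.1) (by linarith [hl.2]) (by ring))))
  have hnorm : Tendsto (fun n => ‖u n - w n‖ ^ 2) atTop (𝓝 (‖x - y‖ ^ 2)) :=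
    ((hulim.sub hwlim).norm).pow 2
  refine le_of_tendsto_of_tendsto'
    (hbcomb.add ((hnorm.const_mul _)))
    ((hbu.const_mul l).add (hbw.const_mul (1 - l)))
    fun n => key (u n) (hu n) (w n) (hw n) l hl
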